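/- Let E, J, R ∈ ℂ^{n×n} be partitioned conformally into blocks of sizes n1, n2, n3 with E = [[Σ_E,0,0],[0,0,0],[0,0,0]] where Σ_E > 0, R replaced by R̃ = [[R̃11, R̃12, 0],[R̃12*, Σ̃_R, 0],[0,0,0]] with [[R̃11, R̃12],[R̃12*, Σ̃_R]] > 0, J = [[J̃11,J̃12,J̃13],[−J̃12*,J̃22,J̃23],[−J̃13*,J̃23*,J̃33]] skew-Hermitian. If the 2×2 bottom-right block matrix [[J̃22 − Σ̃_R, J̃23],[−J̃23*, J̃33]] is nonsingular, then rank([[E, 0],[J − R̃, E]]) = n + rank(E), i.e., the pair (E, J − R̃) is regular and impulse-free. -/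

import Mathlib

open Matrix

section Aux
variable {l m n o p q : Type*} [Fintype m] [Fintype n] [DecidableEq m] [DecidableEq n]
variable {R : Type*} [Field R]

lemma rank_unit_mul (P : Matrix m m R) (M : Matrix m n R) (h : IsUnit P.det) :
    (P * M).rank = M.rank := by
  refine le_antisymm (Matrix.rank_mul_le_right _ _) ?_
  conv_lhs => rw [show M = P⁻¹ * (P * M) by rw [← Matrix.mul_assoc, Matrix.nonsing_inv_mul _ h, Matrix.one_mul]]
  exact Matrix.rank_mul_le_right _ _

lemma rank_mul_unit' (Q : Matrix n n R) (M : Matrix m n R) (h : IsUnit Q.det) :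
    (M * Q).rank = M.rank := by
  refine le_antisymm (Matrix.rank_mul_le_left _ _) ?_
  conv_lhs => rw [show M = (M * Q) * Q⁻¹ by rw [Matrix.mul_assoc, Matrix.mul_nonsing_inv _ h, Matrix.mul_one]]
  exact Matrix.rank_mul_le_left _ _

lemma rank_fromBlocks_zeros [Fintype p] [Fintype q] [DecidableEq q] [Fintype l]
    (B : Matrix l m R) :
    (fromBlocks B 0 0 (0 : Matrix p q R)).rank = B.rank := by
  classical
  let L : (l → R) →ₗ[R] (l ⊕ p → R) :=
    { toFun := fun y => Sum.elim y 0
      map_add' := fun x y => by funext i; cases i <;> simp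
      map_smul' := fun c x => by funext i; cases i <;> simp }
  have hinj : Function.Injective L := by
    intro x y hxy
    funext i
    exact congrFun hxy (Sum.inl i)
  have hrange : LinearMap.range (fromBlocks B 0 0 (0 : Matrix p q R)).mulVecLin
      = (LinearMap.range B.mulVecLin).map L := by
    ext v
    constructor
    · rintro ⟨x, rfl⟩
      refine ⟨B.mulVec (x ∘ Sum.inl), ⟨x ∘ Sum.inl, rfl⟩, ?_⟩
      have : x = Sum.elim (x ∘ Sum.inl) (x ∘ Sum.inr) := (Sum.elim_comp_inl_inr x).symm
      rw [Matrix.mulVecLin_apply, this, fromBlocks_mulVec]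
      simp [L]
    · rintro ⟨y, ⟨z, rfl⟩, rfl⟩
      refine ⟨Sum.elim z 0, ?_⟩
      rw [Matrix.mulVecLin_apply, fromBlocks_mulVec]
      simp [L]
  rw [Matrix.rank, hrange, Matrix.rank]
  exact ((Submodule.equivMapOfInjective L hinj _).finrank_eq).symm

end Aux

set_option maxHeartbeats 1000000 in
lemma key_rank {n1 : ℕ} {m : Type*} [Fintype m] [DecidableEq m]
    (Sg : Matrix (Fin n1) (Fin n1) ℂ) (hSg : IsUnit Sg.det)
    (A : Matrix (Fin n1 ⊕ m) (Fin n1 ⊕ m) ℂ) (hA : IsUnit (A.toBlocks₂₂).det) :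
    (fromBlocks (fromBlocks Sg 0 0 (0 : Matrix m m ℂ)) 0 A
        (fromBlocks Sg 0 0 (0 : Matrix m m ℂ))).rank
      = (n1 + Fintype.card m) + n1 := by
  classical
  set A11 := A.toBlocks₁₁ with hA11
  set A12 := A.toBlocks₁₂ with hA12
  set A21 := A.toBlocks₂₁ with hA21
  set A22 := A.toBlocks₂₂ with hA22
  have hAblocks : A = fromBlocks A11 A12 A21 A22 := (fromBlocks_toBlocks A).symm
  set E : Matrix (Fin n1 ⊕ m) (Fin n1 ⊕ m) ℂ := fromBlocks Sg 0 0 0 with hE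
  set Mmat := fromBlocks E 0 A E with hM
  have hSi : Sg⁻¹ * Sg = 1 := Matrix.nonsing_inv_mul _ hSg
  have hSi' : Sg * Sg⁻¹ = 1 := Matrix.mul_nonsing_inv _ hSg
  have hAi : A22⁻¹ * A22 = 1 := Matrix.nonsing_inv_mul _ hA
  have hAi' : A22 * A22⁻¹ = 1 := Matrix.mul_nonsing_inv _ hA
  set X : Matrix (Fin n1 ⊕ m) (Fin n1 ⊕ m) ℂ :=
    fromBlocks (-(A11 * Sg⁻¹)) 0 (-(A21 * Sg⁻¹)) 0 with hX
  set Z : Matrix (Fin n1 ⊕ m) (Fin n1 ⊕ m) ℂ :=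
    fromBlocks 0 (-(Sg⁻¹ * A12)) 0 0 with hZ
  set A2 : Matrix (Fin n1 ⊕ m) (Fin n1 ⊕ m) ℂ := fromBlocks 0 0 0 A22 with hA2
  set S : Matrix (Fin n1 ⊕ m) (Fin n1 ⊕ m) ℂ := fromBlocks Sg 0 0 A22 with hS
  set T : Matrix (Fin n1 ⊕ m) (Fin n1 ⊕ m) ℂ := fromBlocks Sg⁻¹ 0 0 A22⁻¹ with hT
  have hST : S * T = 1 := by
    rw [hS, hT, fromBlocks_multiply]
    simp [hSi', hAi', fromBlocks_one]
  have hETA2 : E * T * A2 = 0 := by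
    rw [hE, hT, hA2, fromBlocks_multiply, fromBlocks_multiply]
    simp
  have hETS : E * T * S = E := by
    rw [hE, hT, hS, fromBlocks_multiply, fromBlocks_multiply]
    simp [hSi', Matrix.mul_assoc, hSi]
  set L1 : Matrix ((Fin n1 ⊕ m) ⊕ (Fin n1 ⊕ m)) ((Fin n1 ⊕ m) ⊕ (Fin n1 ⊕ m)) ℂ :=
    fromBlocks 1 0 X 1 with hL1
  set L2 := fromBlocks (1 : Matrix (Fin n1 ⊕ m) (Fin n1 ⊕ m) ℂ) (-(E * T)) (0 : Matrix (Fin n1 ⊕ m) (Fin n1 ⊕ m) ℂ) 1 with hL2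
  set R1 := fromBlocks (1 : Matrix (Fin n1 ⊕ m) (Fin n1 ⊕ m) ℂ) (0 : Matrix (Fin n1 ⊕ m) (Fin n1 ⊕ m) ℂ) Z 1 with hR1
  set R2 := fromBlocks (1 : Matrix (Fin n1 ⊕ m) (Fin n1 ⊕ m) ℂ) (1 : Matrix (Fin n1 ⊕ m) (Fin n1 ⊕ m) ℂ) (0 : Matrix (Fin n1 ⊕ m) (Fin n1 ⊕ m) ℂ) 1 with hR2
  set R3 := fromBlocks (1 : Matrix (Fin n1 ⊕ m) (Fin n1 ⊕ m) ℂ) (0 : Matrix (Fin n1 ⊕ m) (Fin n1 ⊕ m) ℂ) (-(T * A2)) 1 with hR3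
  have step1 : L1 * Mmat = fromBlocks E 0 (fromBlocks 0 A12 0 A22) E := by
    rw [hL1, hM, fromBlocks_multiply, fromBlocks_inj]
    refine ⟨by simp, by simp, ?_, by simp⟩
    rw [hX, hE, hAblocks, fromBlocks_multiply, Matrix.one_mul, fromBlocks_add, fromBlocks_inj]
    refine ⟨?_, by simp, ?_, by simp⟩
    · simp [Matrix.neg_mul, Matrix.mul_assoc, hSi]
    · simp [Matrix.neg_mul, Matrix.mul_assoc, hSi]
  have step2 : (fromBlocks E 0 (fromBlocks 0 A12 0 A22) E) * R1
      = fromBlocks E 0 A2 E := by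
    rw [hR1, fromBlocks_multiply, fromBlocks_inj]
    refine ⟨by simp, by simp, ?_, by simp⟩
    rw [Matrix.mul_one, hZ, hE, hA2, fromBlocks_multiply, fromBlocks_add, fromBlocks_inj]
    refine ⟨by simp, ?_, by simp, by simp⟩
    simp [Matrix.mul_neg, ← Matrix.mul_assoc, hSi']
  have step3 : (fromBlocks E 0 A2 E) * R2 = fromBlocks E E A2 (A2 + E) := by
    rw [hR2, fromBlocks_multiply, fromBlocks_inj]
    exact ⟨by simp, by simp, by simp, by simp⟩
  have hA2E : A2 + E = S := by
    rw [hA2, hE, hS, fromBlocks_add, fromBlocks_inj]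
    exact ⟨by simp, by simp, by simp, by simp⟩
  have step4 : L2 * (fromBlocks E E A2 S) = fromBlocks E 0 A2 S := by
    rw [hL2, fromBlocks_multiply, fromBlocks_inj]
    refine ⟨?_, ?_, by simp, by simp⟩
    · rw [Matrix.one_mul, Matrix.neg_mul, hETA2]; simp
    · rw [Matrix.one_mul, Matrix.neg_mul, hETS]; simp
  have step5 : (fromBlocks E 0 A2 S) * R3 = fromBlocks E 0 0 S := by
    rw [hR3, fromBlocks_multiply, fromBlocks_inj]
    refine ⟨by simp, by simp, ?_, by simp⟩
    rw [Matrix.mul_neg, ← Matrix.mul_assoc, hST]; simp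
  have hfact : L2 * (L1 * Mmat * R1 * R2) * R3 = fromBlocks E 0 0 S := by
    rw [step1, step2, step3, hA2E, step4, step5]
  -- determinants of the elementary factors
  have hdL1 : IsUnit L1.det := by
    rw [hL1, Matrix.det_fromBlocks_zero₁₂]; simp
  have hdL2 : IsUnit L2.det := by
    rw [hL2, Matrix.det_fromBlocks_zero₂₁]; simp
  have hdR1 : IsUnit R1.det := by
    rw [hR1, Matrix.det_fromBlocks_zero₁₂]; simp
  have hdR2 : IsUnit R2.det := by
    rw [hR2, Matrix.det_fromBlocks_zero₂₁]; simp
  have hdR3 : IsUnit R3.det := by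
    rw [hR3, Matrix.det_fromBlocks_zero₁₂]; simp
  have hrank : Mmat.rank = (fromBlocks E 0 0 S).rank := by
    rw [← hfact, rank_mul_unit' _ _ hdR3, rank_unit_mul _ _ hdL2,
      rank_mul_unit' _ _ hdR2, rank_mul_unit' _ _ hdR1, rank_unit_mul _ _ hdL1]
  -- reindex fromBlocks E 0 0 S to a fromBlocks U 0 0 0 form
  set κ := Fin n1 ⊕ (Fin n1 ⊕ m) with hκ
  let e : (κ ⊕ m) ≃ ((Fin n1 ⊕ m) ⊕ (Fin n1 ⊕ m)) :=
    { toFun := Sum.elim (Sum.elim (Sum.inl ∘ Sum.inl) Sum.inr) (Sum.inl ∘ Sum.inr)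
      invFun := Sum.elim (Sum.elim (Sum.inl ∘ Sum.inl) (Sum.inr)) (Sum.inl ∘ Sum.inr)
      left_inv := by rintro ((i | (i | i)) | i) <;> rfl
      right_inv := by rintro ((i | i) | (i | i)) <;> rfl }
  set U : Matrix κ κ ℂ := fromBlocks Sg 0 0 S with hU
  have hsub : (fromBlocks E 0 0 S).submatrix e e = fromBlocks U 0 0 (0 : Matrix m m ℂ) := by
    ext i j
    rcases i with (i | (i | i)) | i <;> rcases j with (j | (j | j)) | j <;>
      simp [e, hU, hE, hS, Matrix.fromBlocks, Matrix.submatrix]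
  have hdU : IsUnit U.det := by
    rw [hU, Matrix.det_fromBlocks_zero₁₂, hS, Matrix.det_fromBlocks_zero₁₂]
    exact (hSg.mul (hSg.mul hA))
  have hrankD : (fromBlocks E 0 0 S).rank = n1 + (n1 + Fintype.card m) := by
    rw [← Matrix.rank_submatrix (fromBlocks E 0 0 S) e e, hsub,
      rank_fromBlocks_zeros, Matrix.rank_of_isUnit U ((Matrix.isUnit_iff_isUnit_det U).2 hdU)]
    simp [hκ]
  rw [hrank, hrankD]
  omega

open scoped ComplexOrder

/-- If the lower-right (n2+n3)×(n2+n3) block [[J22 − Σ_R, J23],[−J23*, J33]] is nonsingular,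
then the pair (E, J − R̃) satisfies Dai's impulse-free rank criterion. -/
theorem stmt_16 {n1 n2 n3 : ℕ}
    (SigE R11 J11 : Matrix (Fin n1) (Fin n1) ℂ)
    (R12 J12 : Matrix (Fin n1) (Fin n2) ℂ)
    (J13 : Matrix (Fin n1) (Fin n3) ℂ)
    (SigR J22 : Matrix (Fin n2) (Fin n2) ℂ)
    (J23 : Matrix (Fin n2) (Fin n3) ℂ)
    (J33 : Matrix (Fin n3) (Fin n3) ℂ)
    (hSigE : SigE.PosDef)
    (hRpd : (Matrix.fromBlocks R11 R12 R12ᴴ SigR).PosDef)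
    (hJ : (Matrix.fromBlocks J11 (Matrix.fromCols J12 J13)
        (Matrix.fromRows (-J12ᴴ) (-J13ᴴ)) (Matrix.fromBlocks J22 J23 (-J23ᴴ) J33))ᴴ =
      -(Matrix.fromBlocks J11 (Matrix.fromCols J12 J13)
        (Matrix.fromRows (-J12ᴴ) (-J13ᴴ)) (Matrix.fromBlocks J22 J23 (-J23ᴴ) J33)))
    (hns : (Matrix.fromBlocks (J22 - SigR) J23 (-J23ᴴ) J33).det ≠ 0) :
    (Matrix.fromBlocks
        (Matrix.fromBlocks SigE 0 0 (0 : Matrix (Fin n2 ⊕ Fin n3) (Fin n2 ⊕ Fin n3) ℂ))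
        0
        (Matrix.fromBlocks J11 (Matrix.fromCols J12 J13)
            (Matrix.fromRows (-J12ᴴ) (-J13ᴴ)) (Matrix.fromBlocks J22 J23 (-J23ᴴ) J33) -
          Matrix.fromBlocks R11 (Matrix.fromCols R12 0)
            (Matrix.fromRows R12ᴴ 0) (Matrix.fromBlocks SigR 0 0 0))
        (Matrix.fromBlocks SigE 0 0 (0 : Matrix (Fin n2 ⊕ Fin n3) (Fin n2 ⊕ Fin n3) ℂ))).rank
      = (n1 + n2 + n3) +
        (Matrix.fromBlocks SigE 0 0
          (0 : Matrix (Fin n2 ⊕ Fin n3) (Fin n2 ⊕ Fin n3) ℂ)).rank := by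
  classical
  have hSg : IsUnit SigE.det := hSigE.det_pos.ne'.isUnit
  have hAun : IsUnit (Matrix.fromBlocks (J22 - SigR) J23 (-J23ᴴ) J33).det :=
    isUnit_iff_ne_zero.2 hns
  set A := Matrix.fromBlocks J11 (Matrix.fromCols J12 J13)
      (Matrix.fromRows (-J12ᴴ) (-J13ᴴ)) (Matrix.fromBlocks J22 J23 (-J23ᴴ) J33) -
    Matrix.fromBlocks R11 (Matrix.fromCols R12 0)
      (Matrix.fromRows R12ᴴ 0) (Matrix.fromBlocks SigR 0 0 0) with hAdef
  have hA22 : A.toBlocks₂₂ = Matrix.fromBlocks (J22 - SigR) J23 (-J23ᴴ) J33 := by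
    rw [hAdef]
    ext i j
    rcases i with i | i <;> rcases j with j | j <;>
      simp [Matrix.toBlocks₂₂, Matrix.fromBlocks, Matrix.sub_apply]
  have hkey := key_rank SigE hSg A (by rw [hA22]; exact hAun)
  have hrE : (Matrix.fromBlocks SigE 0 0
      (0 : Matrix (Fin n2 ⊕ Fin n3) (Fin n2 ⊕ Fin n3) ℂ)).rank = n1 := by
    rw [rank_fromBlocks_zeros, Matrix.rank_of_isUnit SigE hSigE.isUnit]
    simp
  rw [hrE]
  rw [show (n1 + n2 + n3) + n1 = (n1 + Fintype.card (Fin n2 ⊕ Fin n3)) + n1 by simp; omega]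
  exact hkey
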